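/- For any bipartite quantum state ρ on ℂ^{d_A}⊗ℂ^{d_B} and any natural number n ≥ 1, the tempered negativity is supermultiplicative under tensor powers: N_τ(ρ^{⊗n}) ≥ N_τ(ρ)^n. -/

import Mathlib

open scoped BigOperators ComplexOrder

noncomputable section

/-- Bipartite matrices on `ℂ^{IA} ⊗ ℂ^{IB}`, indexed by pairs. -/
abbrev BMat (IA IB : Type) : Type := Matrix (IA × IB) (IA × IB) ℂ

/-- Partial transpose on the `B` system: `(X^{T_B})_{(i,j),(k,l)} = X_{(i,l),(k,j)}`. -/
def ptB {IA IB : Type} (X : BMat IA IB) : BMat IA IB :=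
  fun p q => X (p.1, q.2) (q.1, p.2)

/-- Trace norm `‖X‖₁ = tr √(X† X)`. -/
noncomputable def traceNorm {n : Type} [Fintype n] [DecidableEq n]
    (X : Matrix n n ℂ) : ℝ :=
  (((Matrix.posSemidef_conjTranspose_mul_self X).1.eigenvectorUnitary.1 *
    Matrix.diagonal (((↑) : ℝ → ℂ) ∘ Real.sqrt ∘ (Matrix.posSemidef_conjTranspose_mul_self X).1.eigenvalues) *
    (star (Matrix.posSemidef_conjTranspose_mul_self X).1.eigenvectorUnitary : Matrix n n ℂ)).trace).re

/-- Operator norm (largest singular value). -/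
noncomputable def opNorm {n : Type} [Fintype n] [DecidableEq n] (X : Matrix n n ℂ) : ℝ :=
  ‖Matrix.toEuclideanCLM (𝕜 := ℂ) X‖

/-- Logarithmic negativity `E_N(X) = log₂ ‖X^{T_B}‖₁`. -/
noncomputable def EN {IA IB : Type} [Fintype IA] [Fintype IB] [DecidableEq IA] [DecidableEq IB]
    (X : BMat IA IB) : ℝ :=
  Real.logb 2 (traceNorm (ptB X))

/-- The extension `id_k ⊗ f` of a map on matrices, acting blockwise. -/
def extMap {I J : Type} (f : Matrix I I ℂ → Matrix J J ℂ) (k : ℕ)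
    (M : Matrix (Fin k × I) (Fin k × I) ℂ) : Matrix (Fin k × J) (Fin k × J) ℂ :=
  fun p q => f (fun i i' => M (p.1, i) (q.1, i')) p.2 q.2

/-- A map on matrices is completely positive if all its extensions `id_k ⊗ f`
map positive semidefinite matrices to positive semidefinite matrices. -/
def CompletelyPositive {I J : Type} [Fintype I] [Fintype J]
    (f : Matrix I I ℂ → Matrix J J ℂ) : Prop :=
  ∀ (k : ℕ) (M : Matrix (Fin k × I) (Fin k × I) ℂ), M.PosSemidef → (extMap f k M).PosSemidef

/-- A PPTq operation: a Hermitian-preserving, trace-preserving linear map `N`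
such that `T_{B'} ∘ N ∘ T_B` is completely positive. -/
def IsPPTq {IA IB JA JB : Type} [Fintype IA] [Fintype IB] [Fintype JA] [Fintype JB]
    (N : BMat IA IB →ₗ[ℂ] BMat JA JB) : Prop :=
  (∀ X : BMat IA IB, X.IsHermitian → (N X).IsHermitian) ∧
  (∀ X : BMat IA IB, (N X).trace = X.trace) ∧
  CompletelyPositive (fun X => ptB (N (ptB X)))

/-- A bipartite quasi-state: Hermitian with trace one. -/
def IsQuasiState {IA IB : Type} [Fintype IA] [Fintype IB] (ρ : BMat IA IB) : Prop :=
  ρ.IsHermitian ∧ ρ.trace = 1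

/-- A bipartite quantum state: positive semidefinite with trace one. -/
def IsState {IA IB : Type} [Fintype IA] [Fintype IB] (ρ : BMat IA IB) : Prop :=
  ρ.PosSemidef ∧ ρ.trace = 1

/-- The maximally entangled state `Φ^d = (1/d) ∑_{i,j} |ii⟩⟨jj|`. -/
noncomputable def MES (d : ℕ) : BMat (Fin d) (Fin d) :=
  fun p q => if p.1 = p.2 ∧ q.1 = q.2 then (1 : ℂ) / d else 0

/-- `n`-fold tensor (Kronecker) power, with all `A` factors grouped against all `B` factors. -/
def tensorPow {IA IB : Type} (ρ : BMat IA IB) (n : ℕ) :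
    BMat (Fin n → IA) (Fin n → IB) :=
  fun p q => ∏ i : Fin n, ρ (p.1 i, p.2 i) (q.1 i, q.2 i)

/-- Tensor (Kronecker) product of two bipartite matrices, grouping `A` systems together
and `B` systems together. -/
def tensorMul {IA IB JA JB : Type} (ρ : BMat IA IB) (σ : BMat JA JB) :
    BMat (IA × JA) (IB × JB) :=
  fun p q => ρ (p.1.1, p.2.1) (q.1.1, q.2.1) * σ (p.1.2, p.2.2) (q.1.2, q.2.2)

/-- One-shot exact distillable entanglement under PPTq operations. -/
noncomputable def oneShotDistill {IA IB : Type} [Fintype IA] [Fintype IB]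
    (ρ : BMat IA IB) : ℝ :=
  sSup { x : ℝ | ∃ d : ℕ, 0 < d ∧ x = Real.logb 2 d ∧
    ∃ Λ : BMat IA IB →ₗ[ℂ] BMat (Fin d) (Fin d), IsPPTq Λ ∧ Λ ρ = MES d }

/-- One-shot exact entanglement cost under PPTq operations. -/
noncomputable def oneShotCost {IA IB : Type} [Fintype IA] [Fintype IB]
    (ρ : BMat IA IB) : ℝ :=
  sInf { x : ℝ | ∃ d : ℕ, 0 < d ∧ x = Real.logb 2 d ∧
    ∃ Λ : BMat (Fin d) (Fin d) →ₗ[ℂ] BMat IA IB, IsPPTq Λ ∧ Λ (MES d) = ρ }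

/-- The one-shot distillation error for `n` copies towards `Φ^d`, optimized over PPTq operations. -/
noncomputable def distillErr {IA IB : Type} [Fintype IA] [Fintype IB]
    [DecidableEq IA] [DecidableEq IB] (ρ : BMat IA IB) (n d : ℕ) : ℝ :=
  sInf { e : ℝ | ∃ Λ : BMat (Fin n → IA) (Fin n → IB) →ₗ[ℂ] BMat (Fin d) (Fin d),
    IsPPTq Λ ∧ e = traceNorm (Λ (tensorPow ρ n) - MES d) }

/-- The one-shot dilution error for preparing `n` copies from `Φ^d`, optimized over PPTq operations. -/
noncomputable def costErr {IA IB : Type} [Fintype IA] [Fintype IB]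
    [DecidableEq IA] [DecidableEq IB] (ρ : BMat IA IB) (n d : ℕ) : ℝ :=
  sInf { e : ℝ | ∃ Λ : BMat (Fin d) (Fin d) →ₗ[ℂ] BMat (Fin n → IA) (Fin n → IB),
    IsPPTq Λ ∧ e = traceNorm (tensorPow ρ n - Λ (MES d)) }

/-- Distillable entanglement under PPTq operations (asymptotically vanishing error). -/
noncomputable def EDppt {IA IB : Type} [Fintype IA] [Fintype IB]
    [DecidableEq IA] [DecidableEq IB] (ρ : BMat IA IB) : ℝ :=
  sSup { r : ℝ | Filter.Tendsto (fun n : ℕ => distillErr ρ n (2 ^ ⌊r * n⌋₊))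
    Filter.atTop (nhds 0) }

/-- Entanglement cost under PPTq operations (asymptotically vanishing error). -/
noncomputable def ECppt {IA IB : Type} [Fintype IA] [Fintype IB]
    [DecidableEq IA] [DecidableEq IB] (ρ : BMat IA IB) : ℝ :=
  sInf { r : ℝ | Filter.Tendsto (fun n : ℕ => costErr ρ n (2 ^ ⌈r * n⌉₊))
    Filter.atTop (nhds 0) }

/-- Tempered negativity `N_τ(σ | ρ)`. -/
noncomputable def temperedNeg {IA IB : Type} [Fintype IA] [Fintype IB]
    [DecidableEq IA] [DecidableEq IB] (σ ρ : BMat IA IB) : ℝ :=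
  sSup { t : ℝ | ∃ X : Matrix (IA × IB) (IA × IB) ℂ, X.IsHermitian ∧
    opNorm (ptB X) ≤ 1 ∧ (X * ρ).trace = (opNorm X : ℂ) ∧ (X * σ).trace = (t : ℂ) }

/-- Asymptotic exact conversion rate under PPTq operations. -/
noncomputable def convRate {IA IB JA JB : Type} [Fintype IA] [Fintype IB]
    [Fintype JA] [Fintype JB]
    (ρ : BMat IA IB) (σ : BMat JA JB) : ℝ :=
  sSup { r : ℝ | 0 ≤ r ∧ ∀ᶠ n : ℕ in Filter.atTop,
    ∃ Λ : BMat (Fin n → IA) (Fin n → IB) →ₗ[ℂ]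
          BMat (Fin ⌊r * n⌋₊ → JA) (Fin ⌊r * n⌋₊ → JB),
      IsPPTq Λ ∧ Λ (tensorPow ρ n) = tensorPow σ ⌊r * n⌋₊ }


/-! ### Auxiliary lemmas for Statement 13 -/

section Aux13

open scoped Matrix

set_option linter.unusedSectionVars false

lemma aux13_sum_fn_prod {ι κ : Type} [Fintype ι] [DecidableEq ι] [Fintype κ] (g : ι → κ → ℂ) :
    ∑ f : ι → κ, ∏ i, g i (f i) = ∏ i, ∑ a, g i a := by
  rw [← Finset.sum_prod_piFinset Finset.univ g, Fintype.piFinset_univ]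

variable {IA IB : Type} [Fintype IA] [Fintype IB] [DecidableEq IA] [DecidableEq IB]

lemma aux13_ptB_tensorPow (X : BMat IA IB) (n : ℕ) :
    ptB (tensorPow X n) = tensorPow (ptB X) n := rfl

lemma aux13_ptB_one : ptB (1 : BMat IA IB) = 1 := by
  ext p q
  simp only [ptB, Matrix.one_apply, Prod.ext_iff]
  by_cases h1 : p.1 = q.1 <;> by_cases h2 : p.2 = q.2 <;> simp [h1, h2, eq_comm]

lemma aux13_ptB_isHermitian {X : BMat IA IB} (h : X.IsHermitian) : (ptB X).IsHermitian := by
  ext p q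
  simpa [ptB, Matrix.conjTranspose_apply] using congrFun (congrFun h (p.1, q.2)) (q.1, p.2)

lemma aux13_tensorPow_conjTranspose (X : BMat IA IB) (n : ℕ) :
    (tensorPow X n)ᴴ = tensorPow Xᴴ n := by
  ext p q
  simp [tensorPow, Matrix.conjTranspose_apply, star_prod]

lemma aux13_tensorPow_isHermitian {X : BMat IA IB} (h : X.IsHermitian) (n : ℕ) :
    (tensorPow X n).IsHermitian := by
  unfold Matrix.IsHermitian
  rw [aux13_tensorPow_conjTranspose, h.eq]

/-- reindexing equiv -/
def aux13_eAB (IA IB : Type) (n : ℕ) : (Fin n → IA × IB) ≃ (Fin n → IA) × (Fin n → IB) :=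
  Equiv.arrowProdEquivProdArrow (Fin n) (fun _ => IA) (fun _ => IB)

lemma aux13_tensorPow_mul (A B : BMat IA IB) (n : ℕ) :
    tensorPow A n * tensorPow B n = tensorPow (A * B) n := by
  ext p q
  rw [Matrix.mul_apply]
  rw [← Equiv.sum_comp (aux13_eAB IA IB n)]
  have : ∀ h : Fin n → IA × IB,
      tensorPow A n p (aux13_eAB IA IB n h) * tensorPow B n (aux13_eAB IA IB n h) q
        = ∏ i, (A (p.1 i, p.2 i) (h i) * B (h i) (q.1 i, q.2 i)) := by
    intro h
    rw [tensorPow, tensorPow, ← Finset.prod_mul_distrib]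
    exact Finset.prod_congr rfl fun i _ => rfl
  rw [Finset.sum_congr rfl fun h _ => this h,
    aux13_sum_fn_prod (fun i x => A (p.1 i, p.2 i) x * B x (q.1 i, q.2 i))]
  exact Finset.prod_congr rfl fun i _ => (Matrix.mul_apply).symm

lemma aux13_tensorPow_trace (A : BMat IA IB) (n : ℕ) :
    (tensorPow A n).trace = A.trace ^ n := by
  rw [Matrix.trace]
  unfold Matrix.diag
  rw [← Equiv.sum_comp (aux13_eAB IA IB n)]
  have : ∀ h : Fin n → IA × IB,
      tensorPow A n (aux13_eAB IA IB n h) (aux13_eAB IA IB n h) = ∏ i, A (h i) (h i) := by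
    intro h; exact Finset.prod_congr rfl fun i _ => rfl
  rw [Finset.sum_congr rfl fun h _ => this h, aux13_sum_fn_prod (fun _ x => A x x)]
  simp [Matrix.trace, Finset.prod_const, Matrix.diag]

lemma aux13_tensorPow_one (n : ℕ) : tensorPow (1 : BMat IA IB) n = 1 := by
  ext p q
  simp only [tensorPow, Matrix.one_apply, Finset.prod_boole, Finset.mem_univ,
    forall_true_left, Prod.mk.injEq]
  congr 1
  simp [Prod.ext_iff, funext_iff, forall_and]

lemma aux13_tensorPow_pow (A : BMat IA IB) (n m : ℕ) :
    (tensorPow A n) ^ m = tensorPow (A ^ m) n := by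
  induction m with
  | zero => simpa using (aux13_tensorPow_one n).symm
  | succ m ih => rw [pow_succ, ih, aux13_tensorPow_mul, ← pow_succ]

lemma aux13_tensorPow_posSemidef {ρ : BMat IA IB} (h : ρ.PosSemidef) (n : ℕ) :
    (tensorPow ρ n).PosSemidef := by
  open scoped MatrixOrder in obtain ⟨B, rfl⟩ := CStarAlgebra.nonneg_iff_eq_star_mul_self.mp h.nonneg
  rw [Matrix.star_eq_conjTranspose]
  rw [← aux13_tensorPow_mul, ← aux13_tensorPow_conjTranspose]
  exact Matrix.posSemidef_conjTranspose_mul_self _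

end Aux13

section Aux13Norm

set_option linter.unusedSectionVars false

open scoped Matrix

variable {κ : Type} [Fintype κ] [DecidableEq κ]

lemma aux13_toE_apply (A : Matrix κ κ ℂ) (x : EuclideanSpace ℂ κ) (p : κ) :
    (Matrix.toEuclideanCLM (𝕜 := ℂ) A x) p = (A *ᵥ (fun i => x i)) p := rfl

lemma aux13_entry_bound (A : Matrix κ κ ℂ) (p q : κ) : ‖A p q‖ ≤ opNorm A := by
  have h1 : A p q = inner ℂ (EuclideanSpace.single p (1:ℂ))
      (Matrix.toEuclideanCLM (𝕜 := ℂ) A (EuclideanSpace.single q (1:ℂ))) := by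
    rw [EuclideanSpace.inner_single_left]
    simp only [star_one, one_mul, aux13_toE_apply]
    have : (fun i => (EuclideanSpace.single q (1:ℂ)) i) = Pi.single q (1:ℂ) := rfl
    rw [this, Matrix.mulVec_single]
    simp
  rw [h1]
  calc ‖(inner ℂ (EuclideanSpace.single p (1:ℂ))
      (Matrix.toEuclideanCLM (𝕜 := ℂ) A (EuclideanSpace.single q (1:ℂ))) : ℂ)‖
      ≤ ‖EuclideanSpace.single p (1:ℂ)‖ *
        ‖Matrix.toEuclideanCLM (𝕜 := ℂ) A (EuclideanSpace.single q (1:ℂ))‖ :=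
        norm_inner_le_norm _ _
    _ ≤ ‖EuclideanSpace.single p (1:ℂ)‖ * (opNorm A * ‖EuclideanSpace.single q (1:ℂ)‖) := by
        gcongr
        exact ContinuousLinearMap.le_opNorm _ _
    _ ≤ opNorm A := by
        simp [EuclideanSpace.norm_single]

lemma aux13_frobenius_bound (A : Matrix κ κ ℂ) :
    opNorm A ≤ Real.sqrt (∑ p, ∑ q, ‖A p q‖ ^ 2) := by
  apply ContinuousLinearMap.opNorm_le_bound _ (Real.sqrt_nonneg _)
  intro x
  have hx : ∀ p : κ, ‖(Matrix.toEuclideanCLM (𝕜 := ℂ) A x) p‖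
      ≤ Real.sqrt (∑ q, ‖A p q‖ ^ 2) * ‖x‖ := by
    intro p
    set u : EuclideanSpace ℂ κ := (WithLp.equiv 2 _).symm (fun q => star (A p q)) with hu
    have h1 : (Matrix.toEuclideanCLM (𝕜 := ℂ) A x) p = inner ℂ u x := by
      rw [EuclideanSpace.inner_eq_star_dotProduct, aux13_toE_apply]
      simp only [dotProduct, Matrix.mulVec, hu, WithLp.equiv_symm_apply,
        Equiv.apply_symm_apply, star_star]
      simp [Pi.star_apply, star_star, mul_comm]
    have h2 : ‖u‖ = Real.sqrt (∑ q, ‖A p q‖ ^ 2) := by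
      rw [EuclideanSpace.norm_eq]
      congr 1
      apply Finset.sum_congr rfl
      intro q _
      simp [hu]
    rw [h1, ← h2]
    exact norm_inner_le_norm _ _
  rw [EuclideanSpace.norm_eq]
  have : ∑ p, ‖(Matrix.toEuclideanCLM (𝕜 := ℂ) A x) p‖ ^ 2
      ≤ ∑ p, (∑ q, ‖A p q‖ ^ 2) * ‖x‖ ^ 2 := by
    apply Finset.sum_le_sum
    intro p _
    calc ‖(Matrix.toEuclideanCLM (𝕜 := ℂ) A x) p‖ ^ 2
        ≤ (Real.sqrt (∑ q, ‖A p q‖ ^ 2) * ‖x‖) ^ 2 := by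
          apply pow_le_pow_left₀ (norm_nonneg _) (hx p)
      _ = (∑ q, ‖A p q‖ ^ 2) * ‖x‖ ^ 2 := by
          rw [mul_pow, Real.sq_sqrt (Finset.sum_nonneg fun _ _ => sq_nonneg _)]
  calc Real.sqrt (∑ p, ‖(Matrix.toEuclideanCLM (𝕜 := ℂ) A x) p‖ ^ 2)
      ≤ Real.sqrt (∑ p, (∑ q, ‖A p q‖ ^ 2) * ‖x‖ ^ 2) := Real.sqrt_le_sqrt this
    _ = Real.sqrt (∑ p, ∑ q, ‖A p q‖ ^ 2) * ‖x‖ := by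
        rw [← Finset.sum_mul, Real.sqrt_mul (Finset.sum_nonneg fun _ _ =>
          Finset.sum_nonneg fun _ _ => sq_nonneg _), Real.sqrt_sq (norm_nonneg _)]

lemma aux13_trace_conjTranspose_mul_self (A : Matrix κ κ ℂ) :
    (Aᴴ * A).trace = ((∑ p, ∑ q, ‖A p q‖ ^ 2 : ℝ) : ℂ) := by
  simp only [Matrix.trace, Matrix.diag, Matrix.mul_apply, Matrix.conjTranspose_apply]
  push_cast
  rw [Finset.sum_comm]
  apply Finset.sum_congr rfl; intro p _
  apply Finset.sum_congr rfl; intro q _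
  rw [show star (A p q) = (starRingEnd ℂ) (A p q) from rfl, Complex.conj_mul']

lemma aux13_isSelfAdjoint_toE {A : Matrix κ κ ℂ} (h : A.IsHermitian) :
    IsSelfAdjoint (Matrix.toEuclideanCLM (𝕜 := ℂ) A) := by
  have : IsSelfAdjoint A := by
    rw [IsSelfAdjoint, Matrix.star_eq_conjTranspose]; exact h
  exact this.map (Matrix.toEuclideanCLM (𝕜 := ℂ))

lemma aux13_opNorm_sq {A : Matrix κ κ ℂ} (h : A.IsHermitian) :
    opNorm (A ^ 2) = opNorm A ^ 2 := by
  unfold opNorm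
  rw [map_pow]
  have hsa := aux13_isSelfAdjoint_toE h
  rw [sq, sq, ← CStarRing.norm_star_mul_self (x := Matrix.toEuclideanCLM (𝕜 := ℂ) A), hsa.star_eq]

lemma aux13_opNorm_two_pow {A : Matrix κ κ ℂ} (h : A.IsHermitian) (k : ℕ) :
    opNorm (A ^ (2 ^ k)) = opNorm A ^ (2 ^ k) := by
  induction k with
  | zero => simp
  | succ k ih =>
      rw [pow_succ, pow_mul, pow_mul, aux13_opNorm_sq (h.pow _), ih]

lemma aux13_opNorm_one [Nonempty κ] : opNorm (1 : Matrix κ κ ℂ) = 1 := by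
  unfold opNorm
  rw [map_one]
  haveI : Nontrivial (EuclideanSpace ℂ κ) := by
    obtain ⟨i⟩ := ‹Nonempty κ›
    refine ⟨EuclideanSpace.single i 1, 0, fun hc => ?_⟩
    have := congrArg (fun w => w i) hc
    simp [EuclideanSpace.single_apply] at this
  exact norm_one

lemma aux13_le_of_two_pow_le {A b C : ℝ} (hA : 0 ≤ A) (hb : 0 ≤ b)
    (h : ∀ k : ℕ, A ^ (2 ^ k) ≤ C * b ^ (2 ^ k)) : A ≤ b := by
  rcases eq_or_lt_of_le hb with hb0 | hb0
  · have h0 := h 0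
    simp only [pow_zero, pow_one] at h0
    rw [← hb0] at h0 ⊢
    simpa using h0
  · by_contra hAb
    push_neg at hAb
    have hr : 1 < A / b := (one_lt_div hb0).2 hAb
    obtain ⟨m, hm⟩ := pow_unbounded_of_one_lt C hr
    have h1 : ∀ k : ℕ, (A / b) ^ (2 ^ k) ≤ C := by
      intro k
      rw [div_pow, div_le_iff₀ (by positivity)]
      exact h k
    have h2 : (A / b) ^ m ≤ (A / b) ^ (2 ^ m) :=
      pow_le_pow_right₀ (le_of_lt hr) (Nat.le_of_lt (Nat.lt_two_pow_self))
    exact lt_irrefl C (lt_of_lt_of_le hm (le_trans h2 (h1 m)))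

lemma aux13_psd_trace_mul_le (A : Matrix κ κ ℂ) {σ : Matrix κ κ ℂ} (hσ : σ.PosSemidef) :
    ((A * σ).trace).re ≤ opNorm A * σ.trace.re := by
  open scoped MatrixOrder in obtain ⟨B, rfl⟩ := CStarAlgebra.nonneg_iff_eq_star_mul_self.mp hσ.nonneg
  rw [Matrix.star_eq_conjTranspose]
  set a := Matrix.toEuclideanCLM (𝕜 := ℂ) A with ha
  set v : κ → EuclideanSpace ℂ κ := fun i => (WithLp.equiv 2 _).symm (fun k => star (B i k))
    with hv
  have key : ∀ i : κ, (B * (A * Bᴴ)) i i = (inner ℂ (v i) (a (v i)) : ℂ) := by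
    intro i
    rw [EuclideanSpace.inner_eq_star_dotProduct]
    have happ : (a (v i)).ofLp = A *ᵥ (fun k => star (B i k)) := by
      rfl
    rw [happ]
    simp only [dotProduct, hv, Equiv.apply_symm_apply, Pi.star_apply, star_star,
      Matrix.mul_apply, Matrix.conjTranspose_apply, Matrix.mulVec, WithLp.equiv_symm_apply,
      WithLp.ofLp_toLp]
    exact Finset.sum_congr rfl fun j _ => mul_comm _ _
  have htr : (A * (Bᴴ * B)).trace = (B * (A * Bᴴ)).trace := by
    rw [← Matrix.mul_assoc, Matrix.trace_mul_comm]
  rw [htr]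
  have hnv : ∀ i : κ, ‖v i‖ ^ 2 = ∑ k, ‖B i k‖ ^ 2 := by
    intro i
    rw [EuclideanSpace.norm_eq, Real.sq_sqrt (Finset.sum_nonneg fun _ _ => sq_nonneg _)]
    exact Finset.sum_congr rfl fun k _ => by simp [hv]
  have hbound : ∀ i : κ, ((B * (A * Bᴴ)) i i).re ≤ opNorm A * ‖v i‖ ^ 2 := by
    intro i
    rw [key i]
    calc (inner ℂ (v i) (a (v i)) : ℂ).re ≤ ‖(inner ℂ (v i) (a (v i)) : ℂ)‖ := Complex.re_le_norm _
      _ ≤ ‖v i‖ * ‖a (v i)‖ := norm_inner_le_norm _ _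
      _ ≤ ‖v i‖ * (opNorm A * ‖v i‖) := by
          gcongr; exact ContinuousLinearMap.le_opNorm _ _
      _ = opNorm A * ‖v i‖ ^ 2 := by ring
  have htrace_re : ((B * (A * Bᴴ)).trace).re = ∑ i, ((B * (A * Bᴴ)) i i).re := by
    simp [Matrix.trace, Matrix.diag, Complex.re_sum]
  rw [htrace_re]
  have hσtr : ((Bᴴ * B).trace).re = ∑ i, ∑ k, ‖B i k‖ ^ 2 := by
    rw [aux13_trace_conjTranspose_mul_self, Complex.ofReal_re]
  rw [hσtr]
  calc ∑ i, ((B * (A * Bᴴ)) i i).re ≤ ∑ i, opNorm A * ‖v i‖ ^ 2 :=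
        Finset.sum_le_sum fun i _ => hbound i
    _ = opNorm A * ∑ i, ∑ k, ‖B i k‖ ^ 2 := by
        rw [← Finset.mul_sum]
        congr 1
        exact Finset.sum_congr rfl fun i _ => hnv i

end Aux13Norm

section Aux13Main

open scoped Matrix

set_option linter.unusedSectionVars false

variable {IA IB : Type} [Fintype IA] [Fintype IB] [DecidableEq IA] [DecidableEq IB]

lemma aux13_herm_tensorPow_opNorm_le {Y : BMat IA IB} (hY : Y.IsHermitian) (n : ℕ) :
    opNorm (tensorPow Y n) ≤ opNorm Y ^ n := by
  set N : ℝ := (Fintype.card (IA × IB) : ℝ) with hN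
  set b : ℝ := opNorm Y with hb
  have hb0 : 0 ≤ b := norm_nonneg _
  apply aux13_le_of_two_pow_le (norm_nonneg _) (pow_nonneg hb0 n) (C := N ^ n)
  intro k
  set Z : BMat IA IB := Y ^ (2 ^ k) with hZ
  have hZnorm : opNorm Z = b ^ (2 ^ k) := aux13_opNorm_two_pow hY k
  have step1 : opNorm (tensorPow Y n) ^ (2 ^ k) = opNorm (tensorPow Z n) := by
    rw [← aux13_opNorm_two_pow (aux13_tensorPow_isHermitian hY n) k, aux13_tensorPow_pow]
  set F : ℝ := ∑ p, ∑ q, ‖Z p q‖ ^ 2 with hF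
  have hS : (∑ p, ∑ q, ‖tensorPow Z n p q‖ ^ 2) = F ^ n := by
    have h1 : ((tensorPow Z n)ᴴ * tensorPow Z n).trace
        = ((∑ p, ∑ q, ‖tensorPow Z n p q‖ ^ 2 : ℝ) : ℂ) :=
      aux13_trace_conjTranspose_mul_self _
    have h2 : ((tensorPow Z n)ᴴ * tensorPow Z n).trace = ((F ^ n : ℝ) : ℂ) := by
      rw [aux13_tensorPow_conjTranspose, aux13_tensorPow_mul, aux13_tensorPow_trace,
        aux13_trace_conjTranspose_mul_self, ← hF]
      push_cast
      ring
    have := h1.symm.trans h2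
    exact_mod_cast this
  have hFle : F ≤ (N * b ^ (2 ^ k)) ^ 2 := by
    have h3 : F ≤ ∑ _p : IA × IB, ∑ _q : IA × IB, (b ^ (2 ^ k)) ^ 2 := by
      apply Finset.sum_le_sum; intro p _
      apply Finset.sum_le_sum; intro q _
      apply pow_le_pow_left₀ (norm_nonneg _)
      rw [← hZnorm]
      exact aux13_entry_bound Z p q
    calc F ≤ ∑ _p : IA × IB, ∑ _q : IA × IB, (b ^ (2 ^ k)) ^ 2 := h3
      _ = N ^ 2 * (b ^ (2 ^ k)) ^ 2 := by
          simp [Finset.sum_const, hN, Fintype.card_prod]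
          ring
      _ = (N * b ^ (2 ^ k)) ^ 2 := by ring
  have hfrob : opNorm (tensorPow Z n) ≤ (N * b ^ (2 ^ k)) ^ n := by
    have hF0 : 0 ≤ F := Finset.sum_nonneg fun _ _ => Finset.sum_nonneg fun _ _ => sq_nonneg _
    calc opNorm (tensorPow Z n) ≤ Real.sqrt (∑ p, ∑ q, ‖tensorPow Z n p q‖ ^ 2) :=
          aux13_frobenius_bound _
      _ = Real.sqrt (F ^ n) := by rw [hS]
      _ ≤ Real.sqrt (((N * b ^ (2 ^ k)) ^ 2) ^ n) := by
          apply Real.sqrt_le_sqrt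
          exact pow_le_pow_left₀ hF0 hFle n
      _ = (N * b ^ (2 ^ k)) ^ n := by
          rw [← pow_mul, mul_comm 2 n, pow_mul]
          exact Real.sqrt_sq (by positivity)
  calc opNorm (tensorPow Y n) ^ (2 ^ k) = opNorm (tensorPow Z n) := step1
    _ ≤ (N * b ^ (2 ^ k)) ^ n := hfrob
    _ = N ^ n * (b ^ n) ^ (2 ^ k) := by rw [mul_pow, ← pow_mul, mul_comm (2^k) n, pow_mul]

end Aux13Main


section Aux13Card

set_option linter.unusedSectionVars false

variable {IA IB : Type} [Fintype IA] [Fintype IB] [DecidableEq IA] [DecidableEq IB]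

lemma aux13_opNorm_le_card (X : BMat IA IB) (h2 : opNorm (ptB X) ≤ 1) :
    opNorm X ≤ (Fintype.card (IA × IB) : ℝ) := by
  have hE : ∀ p q : IA × IB, ‖X p q‖ ≤ 1 := by
    intro p q
    have hx : X p q = ptB X (p.1, q.2) (q.1, p.2) := rfl
    rw [hx]
    exact (aux13_entry_bound _ _ _).trans h2
  have hsum : ∑ p : IA × IB, ∑ q : IA × IB, ‖X p q‖ ^ 2
      ≤ (Fintype.card (IA × IB) : ℝ) * (Fintype.card (IA × IB) : ℝ) := by
    calc ∑ p : IA × IB, ∑ q : IA × IB, ‖X p q‖ ^ 2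
        ≤ ∑ _p : IA × IB, ∑ _q : IA × IB, (1 : ℝ) := by
          apply Finset.sum_le_sum; intro p _
          apply Finset.sum_le_sum; intro q _
          exact pow_le_one₀ (norm_nonneg _) (hE p q)
      _ = (Fintype.card (IA × IB) : ℝ) * (Fintype.card (IA × IB) : ℝ) := by
          simp [Finset.sum_const, mul_comm]
  calc opNorm X ≤ Real.sqrt (∑ p, ∑ q, ‖X p q‖ ^ 2) := aux13_frobenius_bound X
    _ ≤ Real.sqrt ((Fintype.card (IA × IB) : ℝ) * (Fintype.card (IA × IB) : ℝ)) :=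
        Real.sqrt_le_sqrt hsum
    _ = (Fintype.card (IA × IB) : ℝ) := Real.sqrt_mul_self (Nat.cast_nonneg _)

end Aux13Card

/-- The tempered negativity is supermultiplicative under tensor
powers: `N_τ(ρ^{⊗n}) ≥ N_τ(ρ)^n`. -/
theorem temperedNeg_tensorPow_ge {dA dB : ℕ}
    (ρ : BMat (Fin dA) (Fin dB)) (hρ : IsState ρ) (n : ℕ) (hn : 1 ≤ n) :
    temperedNeg ρ ρ ^ n ≤ temperedNeg (tensorPow ρ n) (tensorPow ρ n) := by
  classical
  have hne : Nonempty (Fin dA × Fin dB) := by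
    by_contra hc
    rw [not_nonempty_iff] at hc
    have h0 : ρ.trace = 0 := by simp [Matrix.trace, Finset.univ_eq_empty]
    exact one_ne_zero (hρ.2.symm.trans h0)
  haveI : Nonempty (Fin dA) := hne.elim fun p => ⟨p.1⟩
  haveI : Nonempty (Fin dB) := hne.elim fun p => ⟨p.2⟩
  have hn0 : (n : ℝ) ≠ 0 := Nat.cast_ne_zero.mpr (Nat.one_le_iff_ne_zero.mp hn)
  set ρn := tensorPow ρ n with hρn
  have hρn_psd : ρn.PosSemidef := aux13_tensorPow_posSemidef hρ.1 n
  have hρn_tr : ρn.trace = 1 := by rw [hρn, aux13_tensorPow_trace, hρ.2, one_pow]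
  set S : Set ℝ := { t : ℝ | ∃ X : Matrix (Fin dA × Fin dB) (Fin dA × Fin dB) ℂ,
    X.IsHermitian ∧ opNorm (ptB X) ≤ 1 ∧ (X * ρ).trace = (opNorm X : ℂ) ∧
    (X * ρ).trace = (t : ℂ) } with hSdef
  set Sn : Set ℝ := { t : ℝ | ∃ X : Matrix ((Fin n → Fin dA) × (Fin n → Fin dB))
      ((Fin n → Fin dA) × (Fin n → Fin dB)) ℂ,
    X.IsHermitian ∧ opNorm (ptB X) ≤ 1 ∧ (X * ρn).trace = (opNorm X : ℂ) ∧
    (X * ρn).trace = (t : ℂ) } with hSndef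
  have hgoal : temperedNeg ρ ρ = sSup S := rfl
  have hgoaln : temperedNeg ρn ρn = sSup Sn := rfl
  rw [hgoal, hgoaln]
  -- `1` is a member of both sets
  have h1S : (1 : ℝ) ∈ S := by
    refine ⟨1, Matrix.isHermitian_one, ?_, ?_, ?_⟩
    · rw [aux13_ptB_one, aux13_opNorm_one]
    · rw [Matrix.one_mul, hρ.2, aux13_opNorm_one]; norm_num
    · rw [Matrix.one_mul, hρ.2]; norm_num
  have h1Sn : (1 : ℝ) ∈ Sn := by
    refine ⟨1, Matrix.isHermitian_one, ?_, ?_, ?_⟩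
    · rw [aux13_ptB_one, aux13_opNorm_one]
    · rw [Matrix.one_mul, hρn_tr, aux13_opNorm_one]; norm_num
    · rw [Matrix.one_mul, hρn_tr]; norm_num
  -- both sets are bounded above
  have hbddS : BddAbove S := by
    refine ⟨(Fintype.card (Fin dA × Fin dB) : ℝ), fun t ht => ?_⟩
    obtain ⟨X, hX1, hX2, hX3, hX4⟩ := ht
    have ht' : t = opNorm X := by
      have h := hX3.symm.trans hX4
      exact_mod_cast h.symm
    rw [ht']
    exact aux13_opNorm_le_card X hX2
  have hbddSn : BddAbove Sn := by
    refine ⟨(Fintype.card ((Fin n → Fin dA) × (Fin n → Fin dB)) : ℝ), fun t ht => ?_⟩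
    obtain ⟨X, hX1, hX2, hX3, hX4⟩ := ht
    have ht' : t = opNorm X := by
      have h := hX3.symm.trans hX4
      exact_mod_cast h.symm
    rw [ht']
    exact aux13_opNorm_le_card X hX2
  -- feasibility is preserved by tensor powers
  have hmem : ∀ t ∈ S, t ^ n ∈ Sn := by
    rintro t ⟨X, hX1, hX2, hX3, hX4⟩
    have ht : t = opNorm X := by
      have h := hX3.symm.trans hX4
      exact_mod_cast h.symm
    have htr : (tensorPow X n * ρn).trace = ((t ^ n : ℝ) : ℂ) := by
      rw [hρn, aux13_tensorPow_mul, aux13_tensorPow_trace, hX4]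
      push_cast
      ring
    have hnorm : opNorm (tensorPow X n) = t ^ n := by
      apply le_antisymm
      · rw [ht]
        exact aux13_herm_tensorPow_opNorm_le hX1 n
      · have h5 : ((tensorPow X n * ρn).trace).re ≤ opNorm (tensorPow X n) * (ρn.trace).re :=
          aux13_psd_trace_mul_le _ hρn_psd
        rw [htr, hρn_tr] at h5
        simpa [← Complex.ofReal_pow] using h5
    refine ⟨tensorPow X n, aux13_tensorPow_isHermitian hX1 n, ?_, ?_, ?_⟩
    · rw [aux13_ptB_tensorPow]
      calc opNorm (tensorPow (ptB X) n) ≤ opNorm (ptB X) ^ n :=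
            aux13_herm_tensorPow_opNorm_le (aux13_ptB_isHermitian hX1) n
        _ ≤ 1 := pow_le_one₀ (norm_nonneg _) hX2
    · rw [htr, hnorm]
    · rw [htr]
  -- sup juggling
  have hSne : S.Nonempty := ⟨1, h1S⟩
  have hM1 : (1 : ℝ) ≤ sSup Sn := le_csSup hbddSn h1Sn
  have hs1 : (1 : ℝ) ≤ sSup S := le_csSup hbddS h1S
  have hM0 : (0 : ℝ) ≤ sSup Sn := le_trans zero_le_one hM1
  have hkey : sSup S ≤ (sSup Sn) ^ ((n : ℝ)⁻¹) := by
    apply csSup_le hSne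
    intro t ht
    have ht0 : 0 ≤ t := by
      obtain ⟨X, hX1, hX2, hX3, hX4⟩ := ht
      have ht' : t = opNorm X := by
        have h := hX3.symm.trans hX4
        exact_mod_cast h.symm
      rw [ht']
      exact norm_nonneg _
    have htn : t ^ n ≤ sSup Sn := le_csSup hbddSn (hmem t ht)
    have h7 : ((t ^ n : ℝ)) ^ ((n : ℝ)⁻¹) ≤ (sSup Sn) ^ ((n : ℝ)⁻¹) :=
      Real.rpow_le_rpow (pow_nonneg ht0 n) htn (by positivity)
    rwa [← Real.rpow_natCast t n, ← Real.rpow_mul ht0, mul_inv_cancel₀ hn0,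
      Real.rpow_one] at h7
  have h8 : sSup S ^ n ≤ ((sSup Sn) ^ ((n : ℝ)⁻¹)) ^ n :=
    pow_le_pow_left₀ (le_trans zero_le_one hs1) hkey n
  have h9 : ((sSup Sn) ^ ((n : ℝ)⁻¹)) ^ n = sSup Sn := by
    rw [← Real.rpow_natCast ((sSup Sn) ^ ((n : ℝ)⁻¹)) n, ← Real.rpow_mul hM0,
      inv_mul_cancel₀ hn0, Real.rpow_one]
  exact h9 ▸ h8


end
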